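/- arXiv:1904.11771 — 2 statements merged into one kernel-verified Lean document; each statement's English description precedes it below -/
import Mathlib

section
/- With the relator Γ on monotone functionals (t Γ(R) r iff ∀ h, t(h) ≤ r(R ⇒ h)): for relations R ⊆ X × Y and S ⊆ Y × Z, if t Γ(R) r and r Γ(S) u with u : (Z → Q) → Q monotone, then t Γ(R∘S) u, where R∘S is relational composition. -/
theorem relator_comp {Q : Type*} [CompleteLattice Q] {X Y Z : Type*}
    (R : X → Y → Prop) (S : Y → Z → Prop)
    (t : (X → Q) → Q) (r : (Y → Q) → Q) (u : (Z → Q) → Q) (hu : Monotone u)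
    (htr : ∀ h : X → Q, t h ≤ r (fun b => ⨆ (a) (_ : R a b), h a))
    (hru : ∀ h : Y → Q, r h ≤ u (fun c => ⨆ (b) (_ : S b c), h b)) :
    ∀ h : X → Q, t h ≤ u (fun c => ⨆ (a) (_ : ∃ y, R a y ∧ S y c), h a) := by
  intro h
  refine (htr h).trans ((hru _).trans (hu ?_))
  intro c
  simp only [iSup_le_iff]
  intro b hbc a hab
  exact le_iSup_of_le a (le_iSup_of_le ⟨b, hab, hbc⟩ le_rfl)
end

section
/- Let Q be a complete lattice, T a countable set of terms, Φ a set of formulas, and sat : T → Φ → Q. Suppose Φ is closed under countable conjunctions (there is an operation conj on countable families of formulas with sat(t, conj X) = inf { sat(t, φ) | φ ∈ X }) and under thresholds (for each φ and a ∈ Q there is step(φ, a) with sat(t, step(φ, a)) = ⊤ if a ≤ sat(t, φ), and ⊥ otherwise). Define t ⊑ r iff ∀ φ, sat(t, φ) ≤ sat(r, φ). Then for every term t there exists a formula χ_t such that for all r: sat(r, χ_t) = ⊤ if t ⊑ r, and sat(r, χ_t) = ⊥ otherwise (assuming ⊤ ≠ ⊥). -/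
open scoped Classical in
theorem characteristic_formula {Q : Type*} [CompleteLattice Q]
    (hne : (⊤ : Q) ≠ ⊥)
    {T Φ : Type*} [Countable T] (sat : T → Φ → Q)
    (conj : Set Φ → Φ)
    (hconj : ∀ s : Set Φ, s.Countable → ∀ t, sat t (conj s) = ⨅ φ ∈ s, sat t φ)
    (step : Φ → Q → Φ)
    (hstep : ∀ φ a t, sat t (step φ a) = if a ≤ sat t φ then (⊤ : Q) else ⊥) :
    ∀ t : T, ∃ χ : Φ, ∀ r : T,
      sat r χ = if (∀ φ, sat t φ ≤ sat r φ) then (⊤ : Q) else ⊥ := by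
  intro t
  -- witness formula for each term r that fails t ⊑ r
  let w : T → Φ := fun r =>
    if h : ∃ φ, ¬ sat t φ ≤ sat r φ then h.choose else conj ∅
  let g : T → Φ := fun r => step (w r) (sat t (w r))
  refine ⟨conj (Set.range g), fun r => ?_⟩
  rw [hconj _ (Set.countable_range g), iInf_range]
  by_cases h : ∀ φ, sat t φ ≤ sat r φ
  · rw [if_pos h]
    rw [iInf_eq_top]; intro r'
    simp only [g, hstep, if_pos (h _)]
  · rw [if_neg h]
    refine le_antisymm (le_trans (iInf_le _ r) ?_) bot_le
    have he : ∃ φ, ¬ sat t φ ≤ sat r φ := by push_neg at h; exact h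
    have hw : ¬ sat t (w r) ≤ sat r (w r) := by
      simpa only [w, dif_pos he] using he.choose_spec
    simp only [g, hstep, if_neg hw, le_refl]
end
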